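/- If Λ = Uᵀ Λ' U where U is a nonnegative square matrix and Λ, Λ' are nonnegative upper-triangular matrices with strictly positive diagonal entries, then for any indices i < j, there is no row index t such that both U_{t,i} > 0 and U_{t,j} > 0. -/
import Mathlib


open Matrix

theorem stmt3 {T : Type*} [Fintype T] [DecidableEq T] [LinearOrder T]
    (U Λ Λ' : Matrix T T ℝ)
    (hU : ∀ i j, 0 ≤ U i j)
    (hΛnn : ∀ i j, 0 ≤ Λ i j) (hΛut : ∀ i j, j < i → Λ i j = 0)
    (hΛd : ∀ i, 0 < Λ i i)
    (hΛ'nn : ∀ i j, 0 ≤ Λ' i j) (hΛ'ut : ∀ i j, j < i → Λ' i j = 0)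
    (hΛ'd : ∀ i, 0 < Λ' i i)
    (heq : Λ = Uᵀ * Λ' * U) :
    ∀ i j, i < j → ¬ ∃ t, 0 < U t i ∧ 0 < U t j := by
  rintro i j hij ⟨t, hti, htj⟩
  have h0 : Λ j i = 0 := hΛut j i hij
  have hpos : 0 < (Uᵀ * Λ' * U) j i := by
    rw [Matrix.mul_apply]
    have hterm : 0 < (Uᵀ * Λ') j t * U t i := by
      apply mul_pos _ hti
      rw [Matrix.mul_apply]
      have hle : U t j * Λ' t t ≤ ∑ s, Uᵀ j s * Λ' s t := by
        have := Finset.single_le_sum (f := fun s => Uᵀ j s * Λ' s t)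
          (fun s _ => mul_nonneg (hU s j) (hΛ'nn s t)) (Finset.mem_univ t)
        simpa [Matrix.transpose_apply] using this
      exact lt_of_lt_of_le (mul_pos htj (hΛ'd t)) hle
    refine Finset.sum_pos' (fun k _ => ?_) ⟨t, Finset.mem_univ t, hterm⟩
    apply mul_nonneg _ (hU k i)
    rw [Matrix.mul_apply]
    exact Finset.sum_nonneg fun s _ => mul_nonneg (hU s j) (hΛ'nn s k)
  rw [← heq, h0] at hpos
  exact lt_irrefl 0 hpos
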